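/- Let f be uniformly distributed on the unit sphere of ℝ^{2n}, condition on the first n coordinates equaling y ∈ ℝⁿ with ‖y‖ < 1. Then the conditional distribution of the last n coordinates is the uniform distribution on the sphere of radius r_y = √(1 − ‖y‖²) in ℝⁿ, and for any point φ ∈ ℝ^{2n} with first n coordinates y, the conditional expectation of ‖f − φ‖ is minimized (over choices of the last n coordinates of φ) when the last n coordinates of φ are 0, with minimal value at least r_y. -/

import Mathlib

open MeasureTheory

/-- After observing the first `n` coordinates `y` (with `‖y‖ < 1`) of a point
uniformly distributed on the unit sphere of `ℝ^{2n}`, the conditional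
distribution `ν` of the last `n` coordinates is the uniform distribution on
the sphere of radius `r = √(1 - ‖y‖²)`: it is a probability measure supported
on that sphere and rotation invariant.  For any reconstruction point `φ` whose
first `n` coordinates equal `y` (so that `‖f - φ‖ = ‖v - c‖` where `v, c` are
the vectors of last coordinates), the conditional expected error is minimized
when `c = 0` (the center of the sphere), with minimal value `r ≥ r`. -/
theorem conditional_error_minimized_at_center (n : ℕ) (hn : 0 < n)
    (y : EuclideanSpace ℝ (Fin n)) (hy : ‖y‖ < 1)
    (r : ℝ) (hr : r = Real.sqrt (1 - ‖y‖ ^ 2))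
    (ν : Measure (EuclideanSpace ℝ (Fin n))) [IsProbabilityMeasure ν]
    (hsupp : ∀ᵐ v ∂ν, ‖v‖ = r)
    (hinv : ∀ e : EuclideanSpace ℝ (Fin n) ≃ₗᵢ[ℝ] EuclideanSpace ℝ (Fin n),
      ν.map e = ν) :
    (∀ c : EuclideanSpace ℝ (Fin n), (∫ v, ‖v - 0‖ ∂ν) ≤ ∫ v, ‖v - c‖ ∂ν) ∧
    (∫ v, ‖v - 0‖ ∂ν) = r ∧ r ≤ ∫ v, ‖v - 0‖ ∂ν := by
  have hint : ∀ c : EuclideanSpace ℝ (Fin n),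
      Integrable (fun v => ‖v - c‖) ν := by
    intro c
    refine Integrable.mono' (integrable_const (r + ‖c‖))
      ((continuous_id.sub continuous_const).norm.aestronglyMeasurable) ?_
    filter_upwards [hsupp] with v hv
    rw [Real.norm_eq_abs, abs_of_nonneg (norm_nonneg _)]
    calc ‖v - c‖ ≤ ‖v‖ + ‖c‖ := norm_sub_le _ _
      _ = r + ‖c‖ := by rw [hv]
  have hzero : (∫ v, ‖v - 0‖ ∂ν) = r := by
    have : (∫ v, ‖v - 0‖ ∂ν) = ∫ _v, r ∂ν := by
      refine integral_congr_ae ?_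
      filter_upwards [hsupp] with v hv
      rw [sub_zero, hv]
    rw [this, integral_const, probReal_univ, one_smul]
  have hmin : ∀ c : EuclideanSpace ℝ (Fin n), r ≤ ∫ v, ‖v - c‖ ∂ν := by
    intro c
    have hneg : (∫ v, ‖v - c‖ ∂ν) = ∫ v, ‖v + c‖ ∂ν := by
      have e := LinearIsometryEquiv.neg ℝ (E := EuclideanSpace ℝ (Fin n))
      have h1 := hinv (LinearIsometryEquiv.neg ℝ)
      conv_lhs => rw [← h1]
      rw [integral_map (LinearIsometryEquiv.neg ℝ).continuous.measurable.aemeasurable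
        ((continuous_sub_right c).norm.aestronglyMeasurable)]
      refine integral_congr_ae (Filter.Eventually.of_forall fun v => ?_)
      show ‖(LinearIsometryEquiv.neg ℝ) v - c‖ = ‖v + c‖
      have hv : (LinearIsometryEquiv.neg ℝ) v = -v := rfl
      rw [hv, show -v - c = -(v + c) by abel, norm_neg]
    have hintp : Integrable (fun v => ‖v + c‖) ν := by
      have := hint (-c); simpa [sub_neg_eq_add] using this
    have h2r : 2 * r ≤ 2 * ∫ v, ‖v - c‖ ∂ν := by
      have key : (∫ v, 2 * ‖v‖ ∂ν) ≤ ∫ v, ‖v - c‖ + ‖v + c‖ ∂ν := by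
        refine integral_mono ?_ ((hint c).add hintp) fun v => ?_
        · have := hint 0
          simpa [sub_zero] using this.const_mul 2
        · have : (2 : ℝ) * ‖v‖ = ‖(v - c) + (v + c)‖ := by
            rw [show (v - c) + (v + c) = (2 : ℝ) • v by
              rw [two_smul]; abel]
            rw [norm_smul]; simp
          rw [this]; exact norm_add_le _ _
      have hl : (∫ v, 2 * ‖v‖ ∂ν) = 2 * r := by
        rw [integral_const_mul]
        have : (∫ v, ‖v‖ ∂ν) = r := by
          have := hzero; simpa [sub_zero] using this
        rw [this]
      rw [integral_add (hint c) hintp, ← hneg] at key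
      rw [hl] at key; linarith
    linarith
  refine ⟨fun c => ?_, hzero, le_of_eq hzero.symm⟩
  rw [hzero]; exact hmin c
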